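/- Let A ∈ ℝ^{n×N} have unit-norm columns a_1,…,a_N, let W_1,…,W_N be subspaces of ℝ^M, and let μ_f be the fusion coherence of (A,(W_j)). Then every block vector h = (h_1,…,h_N), h_j ∈ ℝ^{m_j}, with A·U(h) = 0 satisfies, for every index j, ‖h_j‖_2 ≤ (1 + μ_f^{-1})^{-1} · ∑_{l=1}^N ‖h_l‖_2. -/

import Mathlib

open scoped BigOperators
open Matrix

/-- Euclidean norm of a finite-dimensional real vector. -/
noncomputable def norm2 {ι : Type*} [Fintype ι] (v : ι → ℝ) : ℝ :=
  Real.sqrt (∑ i, v i ^ 2)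

/-- Mixed ℓ₂,₁ norm of a block coefficient vector. -/
noncomputable def l21 {N : ℕ} {m : Fin N → ℕ} (c : ∀ j, Fin (m j) → ℝ) : ℝ :=
  ∑ j, norm2 (c j)

open Classical in
/-- Mixed ℓ₂,₀ "norm": number of nonzero blocks. -/
noncomputable def l20 {N : ℕ} {m : Fin N → ℕ} (c : ∀ j, Fin (m j) → ℝ) : ℕ :=
  (Finset.univ.filter fun j => c j ≠ 0).card

/-- The matrix U(c) whose j-th row is (U_j c_j)ᵀ. -/
noncomputable def Ucmat {N M : ℕ} {m : Fin N → ℕ}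
    (U : ∀ j, Matrix (Fin M) (Fin (m j)) ℝ)
    (c : ∀ j, Fin (m j) → ℝ) : Matrix (Fin N) (Fin M) ℝ :=
  Matrix.of fun j i => (U j).mulVec (c j) i

/-- The ℓ₂ → ℓ₂ operator norm of a real matrix. -/
noncomputable def opNorm {ι κ : Type*} [Fintype ι] [Fintype κ]
    (B : Matrix ι κ ℝ) : ℝ :=
  sSup {r : ℝ | ∃ v : κ → ℝ, norm2 v ≤ 1 ∧ r = norm2 (B.mulVec v)}

/-- Fusion coherence: max over j ≠ k of |⟨a_j,a_k⟩|·‖P_j P_k‖₂→₂. -/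
noncomputable def fusionCoherence {n N M : ℕ} (A : Matrix (Fin n) (Fin N) ℝ)
    (P : Fin N → Matrix (Fin M) (Fin M) ℝ) : ℝ :=
  sSup {r : ℝ | ∃ j k : Fin N, j ≠ k ∧
    r = |∑ i, A i j * A i k| * opNorm (P j * P k)}


lemma norm2_eq_norm {ι : Type*} [Fintype ι] (v : ι → ℝ) :
    norm2 v = ‖(WithLp.equiv 2 (ι → ℝ)).symm v‖ := by
  rw [EuclideanSpace.norm_eq, norm2]
  congr 1; apply Finset.sum_congr rfl; intro i _
  rw [Real.norm_eq_abs, sq_abs]; rfl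

lemma norm2_nonneg {ι : Type*} [Fintype ι] (v : ι → ℝ) : 0 ≤ norm2 v :=
  Real.sqrt_nonneg _

lemma norm2_smul {ι : Type*} [Fintype ι] (r : ℝ) (v : ι → ℝ) :
    norm2 (r • v) = |r| * norm2 v := by
  rw [norm2_eq_norm, norm2_eq_norm, show (WithLp.equiv 2 (ι → ℝ)).symm (r • v)
      = r • (WithLp.equiv 2 (ι → ℝ)).symm v from rfl, norm_smul, Real.norm_eq_abs]

lemma norm2_neg {ι : Type*} [Fintype ι] (v : ι → ℝ) : norm2 (-v) = norm2 v := by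
  rw [norm2_eq_norm, norm2_eq_norm, show (WithLp.equiv 2 (ι → ℝ)).symm (-v)
      = -(WithLp.equiv 2 (ι → ℝ)).symm v from rfl, norm_neg]

lemma norm2_sum_le {ι κ : Type*} [Fintype ι] (s : Finset κ) (f : κ → ι → ℝ) :
    norm2 (∑ l ∈ s, f l) ≤ ∑ l ∈ s, norm2 (f l) := by
  have : (WithLp.equiv 2 (ι → ℝ)).symm (∑ l ∈ s, f l)
      = ∑ l ∈ s, (WithLp.equiv 2 (ι → ℝ)).symm (f l) := WithLp.toLp_sum _ _ _ _
  rw [norm2_eq_norm, this]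
  refine (norm_sum_le _ _).trans ?_
  apply le_of_eq; apply Finset.sum_congr rfl; intro l _; rw [norm2_eq_norm]

lemma norm2_eq_zero {ι : Type*} [Fintype ι] {v : ι → ℝ} (h : norm2 v = 0) : v = 0 := by
  rw [norm2_eq_norm] at h
  have h2 : (WithLp.equiv 2 (ι → ℝ)).symm v = 0 := norm_eq_zero.mp h
  exact congrArg (WithLp.equiv 2 (ι → ℝ)) h2

lemma opNorm_bddAbove {ι κ : Type*} [Fintype ι] [Fintype κ] (B : Matrix ι κ ℝ) :
    BddAbove {r : ℝ | ∃ v : κ → ℝ, norm2 v ≤ 1 ∧ r = norm2 (B.mulVec v)} := by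
  refine ⟨Real.sqrt (∑ i, ∑ k, B i k ^ 2), ?_⟩
  rintro r ⟨v, hv, rfl⟩
  rw [norm2]
  apply Real.sqrt_le_sqrt
  have key : ∀ i, (B.mulVec v i) ^ 2 ≤ (∑ k, B i k ^ 2) * (∑ k, v k ^ 2) := by
    intro i
    simpa [Matrix.mulVec, dotProduct] using
      Finset.sum_mul_sq_le_sq_mul_sq Finset.univ (fun k => B i k) v
  calc ∑ i, (B.mulVec v i) ^ 2 ≤ ∑ i, (∑ k, B i k ^ 2) * (∑ k, v k ^ 2) :=
        Finset.sum_le_sum fun i _ => key i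
    _ ≤ ∑ i, (∑ k, B i k ^ 2) * 1 := by
        apply Finset.sum_le_sum; intro i _
        apply mul_le_mul_of_nonneg_left _ (by positivity)
        have := hv
        rw [norm2] at this
        have h0 : (0:ℝ) ≤ ∑ k, v k ^ 2 := by positivity
        nlinarith [Real.sq_sqrt h0, Real.sqrt_nonneg (∑ k, v k ^ 2)]
    _ = ∑ i, ∑ k, B i k ^ 2 := by simp

lemma norm2_mulVec_le {ι κ : Type*} [Fintype ι] [Fintype κ] (B : Matrix ι κ ℝ)
    (v : κ → ℝ) : norm2 (B.mulVec v) ≤ opNorm B * norm2 v := by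
  rcases eq_or_ne v 0 with rfl | hv
  · rw [show B.mulVec 0 = 0 from Matrix.mulVec_zero B]
    simp [norm2]
  · have ht : 0 < norm2 v := by
      rcases (norm2_nonneg v).lt_or_eq with h | h
      · exact h
      · exact absurd (norm2_eq_zero h.symm) hv
    have hmem : norm2 (B.mulVec ((norm2 v)⁻¹ • v)) ∈
        {r : ℝ | ∃ w : κ → ℝ, norm2 w ≤ 1 ∧ r = norm2 (B.mulVec w)} := by
      refine ⟨(norm2 v)⁻¹ • v, ?_, rfl⟩
      rw [norm2_smul, abs_of_nonneg (by positivity)]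
      rw [inv_mul_cancel₀ ht.ne']
    have hle := le_csSup (opNorm_bddAbove B) hmem
    have hsc : B.mulVec ((norm2 v)⁻¹ • v) = (norm2 v)⁻¹ • B.mulVec v := by
      rw [Matrix.mulVec_smul]
    rw [hsc, norm2_smul, abs_of_nonneg (by positivity)] at hle
    calc norm2 (B.mulVec v) = norm2 v * ((norm2 v)⁻¹ * norm2 (B.mulVec v)) := by
          field_simp
      _ ≤ norm2 v * opNorm B := mul_le_mul_of_nonneg_left hle ht.le
      _ = opNorm B * norm2 v := mul_comm _ _

lemma fusionCoherence_ge {n N M : ℕ} (A : Matrix (Fin n) (Fin N) ℝ)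
    (P : Fin N → Matrix (Fin M) (Fin M) ℝ) {j k : Fin N} (hjk : j ≠ k) :
    |∑ i, A i j * A i k| * opNorm (P j * P k) ≤ fusionCoherence A P := by
  have hbdd : BddAbove {r : ℝ | ∃ j k : Fin N, j ≠ k ∧
      r = |∑ i, A i j * A i k| * opNorm (P j * P k)} := by
    apply Set.Finite.bddAbove
    apply Set.Finite.subset (Set.finite_range
      (fun p : Fin N × Fin N => |∑ i, A i p.1 * A i p.2| * opNorm (P p.1 * P p.2)))
    rintro r ⟨j, k, _, rfl⟩
    exact ⟨(j, k), rfl⟩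
  exact le_csSup hbdd ⟨j, k, hjk, rfl⟩

lemma norm2_mulVec_iso {M k : ℕ} {U : Matrix (Fin M) (Fin k) ℝ}
    (hU : Uᵀ * U = 1) (c : Fin k → ℝ) : norm2 (U.mulVec c) = norm2 c := by
  unfold norm2
  congr 1
  have : (U.mulVec c) ⬝ᵥ (U.mulVec c) = c ⬝ᵥ c := by
    rw [Matrix.dotProduct_mulVec, ← Matrix.mulVec_transpose,
      Matrix.mulVec_mulVec, hU, Matrix.one_mulVec]
  simpa [dotProduct, sq] using this

/-- Every h in the null space of A_P satisfies, for every j,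
‖h_j‖₂ ≤ (1 + μ_f⁻¹)⁻¹ ∑_l ‖h_l‖₂. -/
theorem stmt3 {n N M : ℕ} {m : Fin N → ℕ}
    (A : Matrix (Fin n) (Fin N) ℝ)
    (hA : ∀ j, norm2 (fun i => A i j) = 1)
    (U : ∀ j, Matrix (Fin M) (Fin (m j)) ℝ)
    (hU : ∀ j, (U j)ᵀ * U j = 1)
    (hμ : 0 < fusionCoherence A (fun j => U j * (U j)ᵀ)) :
    ∀ h : (∀ j, Fin (m j) → ℝ), A * Ucmat U h = 0 →
      ∀ j, norm2 (h j) ≤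
        (1 + (fusionCoherence A (fun j => U j * (U j)ᵀ))⁻¹)⁻¹ *
          ∑ l, norm2 (h l) := by
  intro h hAh j
  set μ := fusionCoherence A (fun j => U j * (U j)ᵀ) with hμdef
  set P : Fin N → Matrix (Fin M) (Fin M) ℝ := fun j => U j * (U j)ᵀ with hPdef
  set v : Fin N → Fin M → ℝ := fun l => (U l).mulVec (h l) with hvdef
  set S := ∑ l, norm2 (h l) with hSdef
  -- P l fixes v l
  have hPv : ∀ l, (P l).mulVec (v l) = v l := by
    intro l
    show (U l * (U l)ᵀ).mulVec ((U l).mulVec (h l)) = (U l).mulVec (h l)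
    rw [Matrix.mulVec_mulVec, Matrix.mul_assoc, hU l, Matrix.mul_one]
  -- null space identity, coordinatewise
  have hg : ∀ i, ∑ l, (∑ p, A p j * A p l) * v l i = 0 := by
    intro i
    have hz : ∀ p, ∑ l, A p l * v l i = 0 := by
      intro p
      have := congrFun (congrFun hAh p) i
      simpa [Matrix.mul_apply, Ucmat, Matrix.zero_apply] using this
    calc ∑ l, (∑ p, A p j * A p l) * v l i
        = ∑ l, ∑ p, A p j * (A p l * v l i) := by
          apply Finset.sum_congr rfl; intro l _
          rw [Finset.sum_mul]
          apply Finset.sum_congr rfl; intro p _; ring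
      _ = ∑ p, ∑ l, A p j * (A p l * v l i) := Finset.sum_comm
      _ = ∑ p, A p j * (∑ l, A p l * v l i) := by
          apply Finset.sum_congr rfl; intro p _
          rw [Finset.mul_sum]
      _ = 0 := by simp [hz]
  -- diagonal entry is 1
  have hgj : (∑ p, A p j * A p j) = 1 := by
    have h1 := hA j
    rw [norm2] at h1
    have : (∑ i, A i j ^ 2) = 1 := Real.sqrt_eq_one.mp h1
    calc ∑ p, A p j * A p j = ∑ i, A i j ^ 2 := by
          apply Finset.sum_congr rfl; intro p _; ring
      _ = 1 := this
  -- v j = - sum over l ≠ j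
  have hvj : v j = -∑ l ∈ Finset.univ.erase j, (∑ p, A p j * A p l) • v l := by
    funext i
    have h' := hg i
    rw [← Finset.add_sum_erase _ _ (Finset.mem_univ j), hgj, one_mul] at h'
    show v j i = (-∑ l ∈ Finset.univ.erase j, (∑ p, A p j * A p l) • v l) i
    simp only [Pi.neg_apply, Finset.sum_apply, Pi.smul_apply, smul_eq_mul]
    linarith [h']
  -- apply P j
  have hvj2 : v j = -∑ l ∈ Finset.univ.erase j,
      (∑ p, A p j * A p l) • (P j * P l).mulVec (v l) := by
    conv_lhs => rw [← hPv j, hvj]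
    have : (P j).mulVec (-∑ l ∈ Finset.univ.erase j, (∑ p, A p j * A p l) • v l)
        = -∑ l ∈ Finset.univ.erase j, (∑ p, A p j * A p l) • (P j).mulVec (v l) := by
      rw [Matrix.mulVec_neg]
      congr 1
      induction (Finset.univ.erase j) using Finset.induction with
      | empty => simp [Matrix.mulVec_zero]
      | insert _ _ hx ih =>
          rw [Finset.sum_insert hx, Finset.sum_insert hx, Matrix.mulVec_add,
            Matrix.mulVec_smul, ih]
    rw [this]
    congr 1
    apply Finset.sum_congr rfl; intro l _
    rw [← hPv l, Matrix.mulVec_mulVec, hPv l]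
  -- norm estimate
  have hnv : ∀ l, norm2 (v l) = norm2 (h l) := fun l => norm2_mulVec_iso (hU l) (h l)
  have hkey : norm2 (h j) ≤ μ * (S - norm2 (h j)) := by
    have hstep : norm2 (h j) ≤ ∑ l ∈ Finset.univ.erase j, μ * norm2 (h l) := by
      rw [← hnv j]
      calc norm2 (v j)
          = norm2 (∑ l ∈ Finset.univ.erase j,
              (∑ p, A p j * A p l) • (P j * P l).mulVec (v l)) := by
            rw [hvj2, norm2_neg]
        _ ≤ ∑ l ∈ Finset.univ.erase j,
              norm2 ((∑ p, A p j * A p l) • (P j * P l).mulVec (v l)) :=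
            norm2_sum_le _ _
        _ ≤ ∑ l ∈ Finset.univ.erase j, μ * norm2 (h l) := by
            apply Finset.sum_le_sum; intro l hl
            have hjl : j ≠ l := (Finset.ne_of_mem_erase hl).symm
            rw [norm2_smul]
            calc |∑ p, A p j * A p l| * norm2 ((P j * P l).mulVec (v l))
                ≤ |∑ p, A p j * A p l| * (opNorm (P j * P l) * norm2 (v l)) :=
                  mul_le_mul_of_nonneg_left (norm2_mulVec_le _ _) (abs_nonneg _)
              _ = (|∑ p, A p j * A p l| * opNorm (P j * P l)) * norm2 (v l) := by
                  ring
              _ ≤ μ * norm2 (v l) :=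
                  mul_le_mul_of_nonneg_right (fusionCoherence_ge A P hjl)
                    (norm2_nonneg _)
              _ = μ * norm2 (h l) := by rw [hnv l]
    have herase : ∑ l ∈ Finset.univ.erase j, norm2 (h l) = S - norm2 (h j) := by
      rw [hSdef, Finset.sum_erase_eq_sub (Finset.mem_univ j)]
    calc norm2 (h j) ≤ ∑ l ∈ Finset.univ.erase j, μ * norm2 (h l) := hstep
      _ = μ * (S - norm2 (h j)) := by rw [← Finset.mul_sum, herase]
  -- algebra
  have h1μ : (0:ℝ) < 1 + μ := by linarith
  rw [show (1 + μ⁻¹) = (1 + μ) / μ from by field_simp; ring, inv_div]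
  rw [div_mul_eq_mul_div, le_div_iff₀ h1μ]
  nlinarith [hkey]
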